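/- arXiv:1203.3106 — 3 statements merged into one kernel-verified Lean document; each statement's English description precedes it below -/
import Mathlib

section
/- Let Q ⊂ ℝ^d be a closed axis-parallel cube of side length δ, let S ⊆ ℝ^d be a Lebesgue measurable set, and let ε > 0 satisfy 2ε ≤ δ. Then the Lebesgue measure satisfies vol( (Q ∩ S)_{2ε} ) ≤ 3^d · vol( Q ∩ S_{2ε} ). -/
open MeasureTheory Real

/-- **The reflection argument in the proof of Theorem 1 of Kolassa–Robinson.**
If `Q ⊂ ℝ^d` is a closed axis-parallel cube of side `δ`, `S` is measurable and
`0 < 2ε ≤ δ`, then the Lebesgue measure of the open Euclidean `2ε`-enlargement of `Q ∩ S`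
is at most `3^d` times the measure of `Q` intersected with the `2ε`-enlargement of `S`. -/
theorem cube_intersection_enlargement_volume_bound
    (d : ℕ) (a : Fin d → ℝ) (δ ε : ℝ) (S : Set (Fin d → ℝ))
    (hS : MeasurableSet S) (hε : 0 < ε) (hεδ : 2 * ε ≤ δ) :
    volume {z : Fin d → ℝ | ∃ y ∈ Set.Icc a (fun j => a j + δ) ∩ S,
        Real.sqrt (∑ j, (z j - y j) ^ 2) < 2 * ε} ≤
      3 ^ d * volume (Set.Icc a (fun j => a j + δ) ∩
        {z : Fin d → ℝ | ∃ y ∈ S, Real.sqrt (∑ j, (z j - y j) ^ 2) < 2 * ε}) := by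
  classical
  set Q : Set (Fin d → ℝ) := Set.Icc a (fun j => a j + δ) with hQ
  set S2 : Set (Fin d → ℝ) :=
    {z : Fin d → ℝ | ∃ y ∈ S, Real.sqrt (∑ j, (z j - y j) ^ 2) < 2 * ε} with hS2
  set A : Set (Fin d → ℝ) := Q ∩ S2 with hA
  -- reflected coordinate maps
  set r : Fin d → Fin 3 → ℝ → ℝ := fun j s t =>
    if s = 0 then t else if s = 1 then 2 * a j - t else 2 * (a j + δ) - t with hr
  set T : (Fin d → Fin 3) → (Fin d → ℝ) → (Fin d → ℝ) :=
    fun σ x j => r j (σ j) (x j) with hT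
  have hrMP : ∀ j s, MeasurePreserving (r j s) volume volume := by
    intro j s
    by_cases h0 : s = 0
    · simp only [hr, h0, if_true]; exact MeasurePreserving.id (volume : Measure ℝ)
    · by_cases h1 : s = 1
      · simpa [hr, h0, h1] using Measure.measurePreserving_sub_left
          (volume : Measure ℝ) (2 * a j)
      · simpa [hr, h0, h1] using Measure.measurePreserving_sub_left
          (volume : Measure ℝ) (2 * (a j + δ))
  have hTMP : ∀ σ, MeasurePreserving (T σ) volume volume := by
    intro σ
    exact measurePreserving_pi (fun _ => (volume : Measure ℝ)) (fun _ => volume)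
      (fun j => hrMP j (σ j))
  -- A is measurable
  have hS2open : IsOpen S2 := by
    have : S2 = ⋃ y ∈ S, {z : Fin d → ℝ | Real.sqrt (∑ j, (z j - y j) ^ 2) < 2 * ε} := by
      ext z; simp [hS2]
    rw [this]
    refine isOpen_biUnion fun y _ => ?_
    have hc : Continuous fun z : Fin d → ℝ => Real.sqrt (∑ j, (z j - y j) ^ 2) :=
      Real.continuous_sqrt.comp <| continuous_finset_sum _ fun j _ =>
        ((continuous_apply j).sub continuous_const).pow 2
    exact isOpen_lt hc continuous_const
  have hAmeas : MeasurableSet A := measurableSet_Icc.inter hS2open.measurableSet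
  -- key coordinatewise bound: each coordinate deviation is below the Euclidean norm
  have coordLe : ∀ (z y : Fin d → ℝ) (j : Fin d),
      |z j - y j| ≤ Real.sqrt (∑ i, (z i - y i) ^ 2) := by
    intro z y j
    rw [← Real.sqrt_sq_eq_abs]
    exact Real.sqrt_le_sqrt <| Finset.single_le_sum
      (fun i _ => sq_nonneg (z i - y i)) (Finset.mem_univ j)
  -- covering: the enlargement of Q ∩ S is covered by the reflected copies of A
  have hcover : {z : Fin d → ℝ | ∃ y ∈ Q ∩ S,
      Real.sqrt (∑ j, (z j - y j) ^ 2) < 2 * ε} ⊆ ⋃ σ, T σ ⁻¹' A := by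
    rintro z ⟨y, ⟨hyQ, hyS⟩, hdist⟩
    set σ : Fin d → Fin 3 := fun j =>
      if z j < a j then 1 else if a j + δ < z j then 2 else 0 with hσ
    refine Set.mem_iUnion.2 ⟨σ, ?_⟩
    have hyQ1 : ∀ j, a j ≤ y j := fun j => hyQ.1 j
    have hyQ2 : ∀ j, y j ≤ a j + δ := fun j => hyQ.2 j
    have hcoord : ∀ j, |z j - y j| < 2 * ε := fun j =>
      lt_of_le_of_lt (coordLe z y j) hdist
    -- pointwise facts about w := T σ z
    have hw : ∀ j, (a j ≤ T σ z j ∧ T σ z j ≤ a j + δ) ∧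
        |T σ z j - y j| ≤ |z j - y j| := by
      intro j
      by_cases h1 : z j < a j
      · have hw : T σ z j = 2 * a j - z j := by simp [hT, hσ, hr, h1]
        have hzy : |z j - y j| = y j - z j := by
          rw [abs_sub_comm]
          exact abs_of_nonneg (by linarith [hyQ1 j])
        constructor
        · constructor
          · rw [hw]; linarith
          · rw [hw]
            have : a j - z j ≤ |z j - y j| := by rw [hzy]; linarith [hyQ1 j]
            have : a j - z j < 2 * ε := lt_of_le_of_lt this (hcoord j)
            linarith
        · rw [hw]
          have : 2 * a j - z j - y j = (a j - z j) - (y j - a j) := by ring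
          rw [this, hzy]
          have hp : 0 ≤ a j - z j := by linarith
          have hq : 0 ≤ y j - a j := by linarith [hyQ1 j]
          rw [abs_sub_le_iff]
          constructor <;> linarith
      · by_cases h2 : a j + δ < z j
        · have hw : T σ z j = 2 * (a j + δ) - z j := by simp [hT, hσ, hr, h1, h2]
          have hzy : |z j - y j| = z j - y j :=
            abs_of_nonneg (by linarith [hyQ2 j])
          constructor
          · constructor
            · rw [hw]
              have : z j - (a j + δ) ≤ |z j - y j| := by rw [hzy]; linarith [hyQ2 j]
              have : z j - (a j + δ) < 2 * ε := lt_of_le_of_lt this (hcoord j)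
              linarith
            · rw [hw]; linarith
          · rw [hw]
            have : 2 * (a j + δ) - z j - y j = ((a j + δ) - y j) - (z j - (a j + δ)) := by
              ring
            rw [this, hzy]
            have hp : 0 ≤ (a j + δ) - y j := by linarith [hyQ2 j]
            have hq : 0 ≤ z j - (a j + δ) := by linarith
            rw [abs_sub_le_iff]
            constructor <;> linarith
        · have hw : T σ z j = z j := by simp [hT, hσ, hr, h1, h2]
          exact ⟨⟨by rw [hw]; linarith, by rw [hw]; linarith⟩, by rw [hw]⟩
    refine ⟨⟨fun j => (hw j).1.1, fun j => (hw j).1.2⟩, y, hyS, ?_⟩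
    have hsum : ∑ j, (T σ z j - y j) ^ 2 ≤ ∑ j, (z j - y j) ^ 2 := by
      refine Finset.sum_le_sum fun j _ => ?_
      rw [← sq_abs (T σ z j - y j), ← sq_abs (z j - y j)]
      exact pow_le_pow_left₀ (abs_nonneg _) (hw j).2 2
    exact lt_of_le_of_lt (Real.sqrt_le_sqrt hsum) hdist
  -- conclude
  calc volume {z : Fin d → ℝ | ∃ y ∈ Q ∩ S,
        Real.sqrt (∑ j, (z j - y j) ^ 2) < 2 * ε}
      ≤ volume (⋃ σ, T σ ⁻¹' A) := measure_mono hcover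
    _ ≤ ∑ σ : Fin d → Fin 3, volume (T σ ⁻¹' A) := measure_iUnion_fintype_le _ _
    _ = ∑ _σ : Fin d → Fin 3, volume A := by
        refine Finset.sum_congr rfl fun σ _ => ?_
        exact (hTMP σ).measure_preimage hAmeas.nullMeasurableSet
    _ = (Fintype.card (Fin d → Fin 3) : ENNReal) * volume A := by
        rw [Finset.sum_const, Finset.card_univ, nsmul_eq_mul]
    _ = 3 ^ d * volume A := by
        simp [Fintype.card_fun]
end

section
/- For every integer d ≥ 1 and constants K > 0 and c₀ > 0 there exist constants C' and n₀, depending only on d, K, c₀, such that the following holds. Let G : (0,∞) → (0,∞) be continuously differentiable with G(v) ≥ c₀, |G(v) − 1| ≤ K v² and |G'(v)| ≤ K v for all v > 0. Then for every n ≥ n₀ and every u > 0, setting u* = u − log(G(u))/(n u), one has u* > 0 and | ∫_u^∞ v^{d−1} e^{−n v²/2} G(v) dv − ∫_{u*}^∞ w^{d−1} e^{−n w²/2} dw | ≤ (C'/n) ∫_{u*}^∞ w^{d−1} e^{−n w²/2} dw. -/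
open MeasureTheory Real Set

lemma bn_pow_sub_one (m : ℕ) (x : ℝ) (hx : |x| ≤ 1) :
    |(1 + x) ^ m - 1| ≤ m * 2 ^ m * |x| := by
  induction m with
  | zero => simp
  | succ k ih =>
    have h2 : |1 + x| ≤ 2 := by
      calc |1 + x| ≤ |(1:ℝ)| + |x| := abs_add_le _ _
        _ ≤ 2 := by rw [abs_one]; linarith
    have key : (1 + x) ^ (k + 1) - 1 = (1 + x) * ((1 + x) ^ k - 1) + x := by ring
    calc |(1 + x) ^ (k + 1) - 1| = |(1 + x) * ((1 + x) ^ k - 1) + x| := by rw [key]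
      _ ≤ |(1 + x) * ((1 + x) ^ k - 1)| + |x| := abs_add_le _ _
      _ = |1 + x| * |(1 + x) ^ k - 1| + |x| := by rw [abs_mul]
      _ ≤ 2 * (k * 2 ^ k * |x|) + |x| := by
          gcongr
      _ ≤ (k + 1 : ℕ) * 2 ^ (k + 1) * |x| := by
          have h1 : (1:ℝ) ≤ 2 ^ k := one_le_pow₀ (by norm_num)
          have h0 := abs_nonneg x
          push_cast
          rw [pow_succ]
          nlinarith [mul_nonneg h0 (by linarith : (0:ℝ) ≤ 2 * 2 ^ k - 1),
            mul_nonneg (mul_nonneg (Nat.cast_nonneg k) (by positivity : (0:ℝ) ≤ 2 ^ k)) h0]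

set_option maxHeartbeats 2000000 in
/-- **The one-dimensional substitution step for the Barndorff-Nielsen form**
(proof of Theorem 2 of Kolassa–Robinson). For every `d ≥ 1`, `K > 0`, `c₀ > 0` there are
`C'`, `n₀` depending only on `d, K, c₀` such that: if `G` is `C¹` on `(0,∞)` with
`G ≥ c₀ > 0`, `|G(v) − 1| ≤ K v²` and `|G'(v)| ≤ K v`, then for all `n ≥ n₀` and `u > 0`,
the Barndorff-Nielsen adjusted point `u* = u − log(G(u))/(n u)` is positive and the change
of variables `v* = v − log G(v)/(n v)` introduces relative error at most `C'/n`: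
`|∫_u^∞ v^{d−1} e^{−n v²/2} G(v) dv − ∫_{u*}^∞ w^{d−1} e^{−n w²/2} dw|
  ≤ (C'/n) ∫_{u*}^∞ w^{d−1} e^{−n w²/2} dw`. -/
theorem barndorff_nielsen_substitution
    (d : ℕ) (hd : 1 ≤ d) (K c₀ : ℝ) (hK : 0 < K) (hc₀ : 0 < c₀) :
    ∃ (C' : ℝ) (n₀ : ℕ), ∀ (n : ℕ), n₀ ≤ n →
    ∀ G : ℝ → ℝ,
      ContDiffOn ℝ 1 G (Ioi (0 : ℝ)) →
      (∀ v : ℝ, 0 < v → c₀ ≤ G v) →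
      (∀ v : ℝ, 0 < v → |G v - 1| ≤ K * v ^ 2) →
      (∀ v : ℝ, 0 < v → |deriv G v| ≤ K * v) →
      ∀ u : ℝ, 0 < u →
      0 < u - Real.log (G u) / (n * u) ∧
      |(∫ v in Ioi u, v ^ (d - 1) * exp (-(n : ℝ) * v ^ 2 / 2) * G v) -
          ∫ w in Ioi (u - Real.log (G u) / (n * u)),
            w ^ (d - 1) * exp (-(n : ℝ) * w ^ 2 / 2)| ≤
        C' / n * ∫ w in Ioi (u - Real.log (G u) / (n * u)),
            w ^ (d - 1) * exp (-(n : ℝ) * w ^ 2 / 2) := by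
  -- constants
  set M : ℝ := K / min c₀ 1 + 2 * Real.sqrt K + |Real.log c₀| + 1 with hMdef
  have hmin : 0 < min c₀ 1 := lt_min hc₀ one_pos
  have hAK : K ≤ K / min c₀ 1 := by
    rw [le_div_iff₀ hmin]
    nlinarith [min_le_right c₀ 1]
  have hAc : K / c₀ ≤ K / min c₀ 1 :=
    div_le_div_of_nonneg_left hK.le hmin (min_le_left c₀ 1)
  have hKM : K ≤ M := by
    have h2 : 0 ≤ Real.sqrt K := Real.sqrt_nonneg K
    have h3 : 0 ≤ |Real.log c₀| := abs_nonneg _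
    simp only [hMdef]; linarith
  have hKc₀M : K / c₀ ≤ M := by
    have h2 : 0 ≤ Real.sqrt K := Real.sqrt_nonneg K
    have h3 : 0 ≤ |Real.log c₀| := abs_nonneg _
    simp only [hMdef]; linarith
  have hM1 : (1:ℝ) ≤ M := by
    have h1 : 0 ≤ K / min c₀ 1 := by positivity
    have h2 : 0 ≤ Real.sqrt K := Real.sqrt_nonneg K
    have h3 : 0 ≤ |Real.log c₀| := abs_nonneg _
    simp only [hMdef]; linarith
  have hM0 : (0:ℝ) < M := lt_of_lt_of_le one_pos hM1
  have hlogcM : |Real.log c₀| ≤ M := by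
    have h1 : 0 ≤ K / min c₀ 1 := by positivity
    have h2 : 0 ≤ Real.sqrt K := Real.sqrt_nonneg K
    simp only [hMdef]; linarith
  have hsqKM : 2 * Real.sqrt K ≤ M := by
    have h1 : 0 ≤ K / min c₀ 1 := by positivity
    have h3 : 0 ≤ |Real.log c₀| := abs_nonneg _
    simp only [hMdef]; linarith
  set C₂ : ℝ := K / c₀ + M with hC₂def
  have hC₂0 : 0 < C₂ := by positivity
  set D : ℝ := (d : ℝ) * 2 ^ d * M with hDdef
  have hD0 : 0 ≤ D := by positivity
  set C₁ : ℝ := 2 * D + M ^ 2 + C₂ with hC₁def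
  have hC₁0 : 0 < C₁ := by positivity
  clear_value M C₂ D C₁
  refine ⟨2 * C₁, ⌈4 * (C₁ + C₂ + M + D) + 4⌉₊, fun n hn G hG hGc hGK hG' u hu => ?_⟩
  have hnT : 4 * (C₁ + C₂ + M + D) + 4 ≤ (n : ℝ) :=
    le_trans (Nat.le_ceil _) (Nat.cast_le.mpr hn)
  have hn0 : (0 : ℝ) < n := by linarith
  have hnne : (n : ℝ) ≠ 0 := ne_of_gt hn0
  have hn4M : 4 * M ≤ n := by linarith
  have hn4C₂ : 4 * C₂ ≤ n := by linarith
  have hn4C₁ : 4 * C₁ ≤ n := by linarith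
  have hn4D : 4 * D ≤ n := by linarith
  have hMn : M / n ≤ 1 / 4 := by rw [div_le_div_iff₀ hn0 (by norm_num)]; linarith
  have hC₂n : C₂ / n ≤ 1 / 4 := by rw [div_le_div_iff₀ hn0 (by norm_num)]; linarith
  have hC₁n : C₁ / n ≤ 1 / 4 := by rw [div_le_div_iff₀ hn0 (by norm_num)]; linarith
  have hDn : D / n ≤ 1 / 4 := by rw [div_le_div_iff₀ hn0 (by norm_num)]; linarith
  -- basic pointwise facts
  have hGpos : ∀ v : ℝ, 0 < v → 0 < G v := fun v hv => lt_of_lt_of_le hc₀ (hGc v hv)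
  have hlog2 : ∀ v : ℝ, 0 < v → |Real.log (G v)| ≤ M * v ^ 2 := by
    intro v hv
    have hg := hGpos v hv
    have hKv := hGK v hv
    rcases le_or_gt 1 (G v) with h1 | h1
    · have hub : Real.log (G v) ≤ K * v ^ 2 := by
        have h2 := Real.log_le_sub_one_of_pos hg
        have h3 : G v - 1 ≤ K * v ^ 2 := (abs_le.1 hKv).2
        linarith
      rw [abs_of_nonneg (Real.log_nonneg h1)]
      nlinarith [sq_nonneg v, hKM]
    · have hlb0 : Real.log (G v) < 0 := Real.log_neg hg h1
      rw [abs_of_neg hlb0]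
      have h3 : Real.log (G v)⁻¹ ≤ (G v)⁻¹ - 1 := Real.log_le_sub_one_of_pos (inv_pos.2 hg)
      rw [Real.log_inv] at h3
      have h4 : 1 - G v ≤ K * v ^ 2 := by
        have := (abs_le.1 hKv).1; linarith
      have h5 : (G v)⁻¹ - 1 = (1 - G v) / G v := by field_simp
      have h6 : (1 - G v) / G v ≤ K * v ^ 2 / c₀ :=
        div_le_div₀ (by positivity) h4 hc₀ (hGc v hv)
      have h7 : K * v ^ 2 / c₀ ≤ M * v ^ 2 := by
        have he : K * v ^ 2 / c₀ = K / c₀ * v ^ 2 := by ring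
        rw [he]
        exact mul_le_mul_of_nonneg_right hKc₀M (sq_nonneg v)
      rw [h5] at h3
      exact le_trans h3 (le_trans h6 h7)
  have hlog1 : ∀ v : ℝ, 0 < v → |Real.log (G v)| ≤ M * v := by
    intro v hv
    rcases le_or_gt v 1 with h1 | h1
    · have h2 := hlog2 v hv
      have h3 : M * v ^ 2 ≤ M * v := by
        nlinarith [mul_nonneg (mul_pos hM0 hv).le (by linarith : (0:ℝ) ≤ 1 - v)]
      linarith
    · rw [abs_le]
      constructor
      · have h2 : Real.log c₀ ≤ Real.log (G v) :=
          (Real.log_le_log_iff hc₀ (hGpos v hv)).mpr (hGc v hv)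
        have h3 : -|Real.log c₀| ≤ Real.log c₀ := neg_abs_le _
        nlinarith [abs_nonneg (Real.log c₀)]
      · have hub : G v ≤ 1 + K * v ^ 2 := by
          have := (abs_le.1 (hGK v hv)).2; linarith
        have hsq : G v ≤ (1 + Real.sqrt K * v) ^ 2 := by
          nlinarith [Real.sqrt_nonneg K, Real.sq_sqrt hK.le, hv.le]
        have hpos : (0:ℝ) < 1 + Real.sqrt K * v := by positivity
        have h2 : Real.log (G v) ≤ Real.log ((1 + Real.sqrt K * v) ^ 2) :=
          (Real.log_le_log_iff (hGpos v hv) (by positivity)).mpr hsq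
        have h3 : Real.log ((1 + Real.sqrt K * v) ^ 2) = 2 * Real.log (1 + Real.sqrt K * v) := by
          rw [Real.log_pow]; push_cast; ring
        have h4 : Real.log (1 + Real.sqrt K * v) ≤ Real.sqrt K * v := by
          have := Real.log_le_sub_one_of_pos hpos; linarith
        nlinarith [Real.sqrt_nonneg K]
  -- the substitution map
  set φ : ℝ → ℝ := fun v => v - Real.log (G v) / ((n : ℝ) * v) with hφdef
  clear_value φ
  have hφ_dev : ∀ v : ℝ, 0 < v → |Real.log (G v) / ((n : ℝ) * v)| ≤ M * v / n := by
    intro v hv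
    rw [abs_div, abs_of_pos (by positivity : (0:ℝ) < (n:ℝ) * v)]
    rw [div_le_div_iff₀ (by positivity) hn0]
    have := hlog2 v hv
    nlinarith
  have hφ_lb : ∀ v : ℝ, 0 < v → v / 2 ≤ φ v := by
    intro v hv
    have h1 := hφ_dev v hv
    have h2 : M * v / n ≤ v / 4 := by
      rw [div_le_div_iff₀ hn0 (by norm_num)]; nlinarith
    have h3 := (abs_le.1 h1).2
    simp only [hφdef]; linarith
  have hφu_pos : 0 < φ u := lt_of_lt_of_le (by positivity) (hφ_lb u hu)
  have hφu_eq : u - Real.log (G u) / ((n : ℝ) * u) = φ u := by rw [hφdef]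
  rw [hφu_eq]
  refine ⟨hφu_pos, ?_⟩
  -- derivative of φ
  have hGd : ∀ v : ℝ, 0 < v → HasDerivAt G (deriv G v) v := by
    intro v hv
    have hdo : DifferentiableOn ℝ G (Ioi 0) := hG.differentiableOn one_ne_zero
    exact (hdo.differentiableAt (Ioi_mem_nhds hv)).hasDerivAt
  set φ' : ℝ → ℝ := fun v =>
    1 - deriv G v / ((n : ℝ) * v * G v) + Real.log (G v) / ((n : ℝ) * v ^ 2) with hφ'def
  clear_value φ'
  have hφd : ∀ v : ℝ, 0 < v → HasDerivAt φ (φ' v) v := by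
    intro v hv
    have hgne : G v ≠ 0 := ne_of_gt (hGpos v hv)
    have hvne : v ≠ 0 := ne_of_gt hv
    have hnv : (n : ℝ) * v ≠ 0 := by positivity
    have hlogd : HasDerivAt (fun x => Real.log (G x)) (deriv G v / G v) v :=
      (hGd v hv).log hgne
    have hden : HasDerivAt (fun x : ℝ => (n : ℝ) * x) (n : ℝ) v := by
      simpa using (hasDerivAt_id v).const_mul (n : ℝ)
    have hdiv := hlogd.div hden hnv
    have h := (hasDerivAt_id v).sub hdiv
    convert h using 1 <;> try rfl
    · ext x; simp [hφdef]
    simp only [hφ'def]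
    field_simp
    ring
  have hφ'dev : ∀ v : ℝ, 0 < v → |φ' v - 1| ≤ C₂ / n := by
    intro v hv
    have hg := hGpos v hv
    have h1 : |deriv G v / ((n : ℝ) * v * G v)| ≤ K / c₀ / n := by
      rw [abs_div, abs_of_pos (by positivity : (0:ℝ) < (n:ℝ) * v * G v)]
      have hstep : |deriv G v| / ((n:ℝ) * v * G v) ≤ K * v / ((n:ℝ) * v * c₀) :=
        div_le_div₀ (by positivity) (hG' v hv) (by positivity)
          (mul_le_mul_of_nonneg_left (hGc v hv) (by positivity : (0:ℝ) ≤ (n:ℝ) * v))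
      have heq : K * v / ((n:ℝ) * v * c₀) = K / c₀ / n := by
        field_simp
      rw [heq] at hstep
      exact hstep
    have h2 : |Real.log (G v) / ((n : ℝ) * v ^ 2)| ≤ M / n := by
      rw [abs_div, abs_of_pos (by positivity : (0:ℝ) < (n:ℝ) * v ^ 2)]
      have hstep : |Real.log (G v)| / ((n:ℝ) * v ^ 2) ≤ M * v ^ 2 / ((n:ℝ) * v ^ 2) :=
        div_le_div₀ (by positivity) (hlog2 v hv) (by positivity) le_rfl
      have heq : M * v ^ 2 / ((n:ℝ) * v ^ 2) = M / n := by
        field_simp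
      rw [heq] at hstep
      exact hstep
    have hkey : φ' v - 1 = -(deriv G v / ((n : ℝ) * v * G v)) + Real.log (G v) / ((n : ℝ) * v ^ 2) := by
      simp only [hφ'def]; ring
    calc |φ' v - 1| = |-(deriv G v / ((n : ℝ) * v * G v)) + Real.log (G v) / ((n : ℝ) * v ^ 2)| := by
          rw [hkey]
      _ ≤ |-(deriv G v / ((n : ℝ) * v * G v))| + |Real.log (G v) / ((n : ℝ) * v ^ 2)| := abs_add_le _ _
      _ ≤ K / c₀ / n + M / n := by rw [abs_neg]; exact add_le_add h1 h2
      _ = C₂ / n := by rw [hC₂def]; ring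
  have hφ'rng : ∀ v : ℝ, 0 < v → 3/4 ≤ φ' v ∧ φ' v ≤ 5/4 := by
    intro v hv
    have h1 := abs_le.1 (hφ'dev v hv)
    constructor <;> linarith [h1.1, h1.2]
  have hcontφ : ContinuousOn φ (Ici u) := fun x hx =>
    ((hφd x (lt_of_lt_of_le hu hx)).continuousAt).continuousWithinAt
  have hmono : StrictMonoOn φ (Ici u) := by
    apply strictMonoOn_of_deriv_pos (convex_Ici u) hcontφ
    intro x hx
    rw [interior_Ici] at hx
    have hx0 : 0 < x := hu.trans hx
    rw [(hφd x hx0).deriv]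
    linarith [(hφ'rng x hx0).1]
  have himg : φ '' Ioi u = Ioi (φ u) := by
    apply Subset.antisymm
    · rintro _ ⟨x, hx, rfl⟩
      exact hmono self_mem_Ici (mem_Ici.2 (le_of_lt hx)) hx
    · intro y hy
      have hy' : φ u < y := hy
      obtain ⟨b, hb1, hb2⟩ : ∃ b : ℝ, u + 1 ≤ b ∧ 2 * (y + 1) ≤ b :=
        ⟨max (u + 1) (2 * (y + 1)), le_max_left _ _, le_max_right _ _⟩
      have hbu : u ≤ b := by linarith
      have hb0 : 0 < b := by linarith
      have hφb : y < φ b := by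
        have := hφ_lb b hb0
        linarith
      have hcont2 : ContinuousOn φ (Icc u b) := hcontφ.mono Icc_subset_Ici_self
      have hsub := intermediate_value_Icc hbu hcont2
      obtain ⟨x, hx, hxy⟩ := hsub ⟨le_of_lt hy', le_of_lt hφb⟩
      refine ⟨x, ?_, hxy⟩
      rcases eq_or_lt_of_le hx.1 with h | h
      · exfalso
        rw [← h] at hxy
        linarith [hxy ▸ hy']
      · exact h
  -- change of variables
  set g : ℝ → ℝ := fun w => w ^ (d - 1) * Real.exp (-(n : ℝ) * w ^ 2 / 2) with hgdef
  have hCOV : (∫ w in Ioi (φ u), g w) = ∫ v in Ioi u, |φ' v| * g (φ v) := by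
    rw [← himg]
    rw [integral_image_eq_integral_abs_deriv_smul measurableSet_Ioi
      (fun x hx => (hφd x (hu.trans hx)).hasDerivWithinAt)
      (hmono.injOn.mono Ioi_subset_Ici_self) g]
    simp only [smul_eq_mul]
  -- pointwise identity
  set R : ℝ → ℝ := fun v =>
    (1 - Real.log (G v) / ((n : ℝ) * v ^ 2)) ^ (d - 1) *
      Real.exp (-(Real.log (G v)) ^ 2 / (2 * (n : ℝ) * v ^ 2)) * φ' v with hRdef
  clear_value R
  have hpoint : ∀ v : ℝ, 0 < v →
      |φ' v| * g (φ v) = (v ^ (d - 1) * Real.exp (-(n : ℝ) * v ^ 2 / 2) * G v) * R v := by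
    intro v hv
    have habs : |φ' v| = φ' v := abs_of_pos (by linarith [(hφ'rng v hv).1])
    have hvne : v ≠ 0 := ne_of_gt hv
    have hφeq : φ v = v * (1 - Real.log (G v) / ((n : ℝ) * v ^ 2)) := by
      rw [hφdef]
      field_simp
    have hpow : (φ v) ^ (d - 1) =
        v ^ (d - 1) * (1 - Real.log (G v) / ((n : ℝ) * v ^ 2)) ^ (d - 1) := by
      rw [hφeq, mul_pow]
    have hexp : -(n : ℝ) * (φ v) ^ 2 / 2 =
        -(n : ℝ) * v ^ 2 / 2 + Real.log (G v) +
          -(Real.log (G v)) ^ 2 / (2 * (n : ℝ) * v ^ 2) := by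
      rw [hφdef]
      field_simp
      ring
    rw [hgdef]
    simp only []
    rw [habs, hpow, hexp, Real.exp_add, Real.exp_add, Real.exp_log (hGpos v hv), hRdef]
    ring
  -- bound on R
  have hRdev : ∀ v : ℝ, 0 < v → |R v - 1| ≤ C₁ / n := by
    intro v hv
    set x : ℝ := -(Real.log (G v) / ((n : ℝ) * v ^ 2)) with hxdef
    have hx : |x| ≤ M / n := by
      rw [hxdef, abs_neg, abs_div, abs_of_pos (by positivity : (0:ℝ) < (n:ℝ) * v ^ 2)]
      have hstep : |Real.log (G v)| / ((n:ℝ) * v ^ 2) ≤ M * v ^ 2 / ((n:ℝ) * v ^ 2) :=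
        div_le_div₀ (by positivity) (hlog2 v hv) (by positivity) le_rfl
      have heq : M * v ^ 2 / ((n:ℝ) * v ^ 2) = M / n := by field_simp
      rw [heq] at hstep; exact hstep
    have hx1 : |x| ≤ 1 := le_trans hx (by linarith)
    have ha := bn_pow_sub_one (d - 1) x hx1
    have ha' : |(1 + x) ^ (d - 1) - 1| ≤ D / n := by
      have h1 : ((d - 1 : ℕ) : ℝ) ≤ (d : ℝ) := Nat.cast_le.mpr (Nat.sub_le d 1)
      have h2 : (2:ℝ) ^ (d - 1) ≤ 2 ^ d := pow_le_pow_right₀ (by norm_num) (Nat.sub_le d 1)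
      calc |(1 + x) ^ (d - 1) - 1| ≤ ((d - 1 : ℕ) : ℝ) * 2 ^ (d - 1) * |x| := ha
        _ ≤ (d : ℝ) * 2 ^ d * (M / n) := by
            gcongr
        _ = D / n := by rw [hDdef]; ring
    set t : ℝ := (Real.log (G v)) ^ 2 / (2 * (n : ℝ) * v ^ 2) with htdef
    have ht0 : 0 ≤ t := by rw [htdef]; positivity
    have htub : t ≤ M ^ 2 / (2 * n) := by
      rw [htdef]
      have h1 : (Real.log (G v)) ^ 2 ≤ (M * v) ^ 2 := by
        have h := abs_le.1 (hlog1 v hv)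
        exact sq_le_sq' h.1 h.2
      have hstep : (Real.log (G v)) ^ 2 / (2 * (n:ℝ) * v ^ 2) ≤ (M * v) ^ 2 / (2 * (n:ℝ) * v ^ 2) :=
        div_le_div₀ (by positivity) h1 (by positivity) le_rfl
      have heq : (M * v) ^ 2 / (2 * (n:ℝ) * v ^ 2) = M ^ 2 / (2 * n) := by field_simp
      rw [heq] at hstep; exact hstep
    have hb : |Real.exp (-t) - 1| ≤ M ^ 2 / (2 * (n:ℝ)) := by
      have h1 : Real.exp (-t) ≤ 1 := Real.exp_le_one_iff.mpr (by linarith)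
      have h2 : 1 - t ≤ Real.exp (-t) := by
        have := Real.add_one_le_exp (-t); linarith
      rw [abs_of_nonpos (by linarith)]
      linarith
    have hbub : Real.exp (-t) ≤ 1 := Real.exp_le_one_iff.mpr (by linarith)
    have hb0 : 0 < Real.exp (-t) := Real.exp_pos _
    have hc := hφ'dev v hv
    have hcrng := hφ'rng v hv
    have hReq : R v = (1 + x) ^ (d - 1) * Real.exp (-t) * φ' v := by
      have e1 : -(Real.log (G v)) ^ 2 / (2 * (n : ℝ) * v ^ 2) = -t := by rw [htdef]; ring
      have e2 : (1 : ℝ) - Real.log (G v) / ((n : ℝ) * v ^ 2) = 1 + x := by rw [hxdef]; ring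
      simp only [hRdef]
      rw [e2, e1]
    set a : ℝ := (1 + x) ^ (d - 1) with hadef
    set bb : ℝ := Real.exp (-t) with hbbdef
    set c : ℝ := φ' v with hcdef
    have harng : |a - 1| ≤ 1 / 4 := le_trans ha' hDn
    have hkey : a * bb * c - 1 = (a - 1) * (bb * c) + (bb - 1) * c + (c - 1) := by ring
    have hbc : |bb * c| ≤ 2 := by
      rw [abs_mul, abs_of_pos hb0, abs_of_pos (by linarith [hcrng.1] : (0:ℝ) < c)]
      have := mul_le_mul hbub hcrng.2 (by linarith [hcrng.1]) zero_le_one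
      linarith
    have hcabs : |c| ≤ 2 := by
      rw [abs_of_pos (by linarith [hcrng.1] : (0:ℝ) < c)]; linarith [hcrng.2]
    calc |R v - 1| = |(a - 1) * (bb * c) + (bb - 1) * c + (c - 1)| := by rw [hReq, hkey]
      _ ≤ |(a - 1) * (bb * c)| + |(bb - 1) * c| + |c - 1| := by
          exact le_trans (abs_add_le _ _) (by gcongr; exact abs_add_le _ _)
      _ = |a - 1| * |bb * c| + |bb - 1| * |c| + |c - 1| := by
          rw [abs_mul (a - 1) (bb * c), abs_mul (bb - 1) c]
      _ ≤ (D / n) * 2 + (M ^ 2 / (2 * (n:ℝ))) * 2 + C₂ / n := by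
          have t1 : |a - 1| * |bb * c| ≤ (D / n) * 2 :=
            mul_le_mul ha' hbc (abs_nonneg _) (by positivity)
          have t2 : |bb - 1| * |c| ≤ (M ^ 2 / (2 * (n:ℝ))) * 2 :=
            mul_le_mul hb hcabs (abs_nonneg _) (by positivity)
          linarith [hc]
      _ = C₁ / n := by
          rw [hC₁def]
          field_simp
  -- integrability
  have hIoi0 : Ioi u ⊆ Ioi (0:ℝ) := fun x hx => hu.trans hx
  have hg₀ : ∀ m : ℕ, IntegrableOn (fun v : ℝ => v ^ m * Real.exp (-(n:ℝ) * v ^ 2 / 2)) (Ioi u) := by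
    intro m
    have h0 := integrableOn_rpow_mul_exp_neg_mul_sq (show (0:ℝ) < (n:ℝ)/2 by positivity)
        (show (-1:ℝ) < ((m : ℕ) : ℝ) from lt_of_lt_of_le neg_one_lt_zero (Nat.cast_nonneg m))
    have h1 := h0.mono_set hIoi0
    apply h1.congr_fun ?_ measurableSet_Ioi
    intro x hx
    show x ^ ((m : ℕ) : ℝ) * Real.exp (-((n:ℝ)/2) * x ^ 2) = x ^ m * Real.exp (-(n:ℝ) * x ^ 2 / 2)
    rw [Real.rpow_natCast]
    congr 1
    ring
  set h : ℝ → ℝ := fun v => v ^ (d - 1) * Real.exp (-(n : ℝ) * v ^ 2 / 2) * G v with hhdef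
  have hcexp : Continuous fun v : ℝ => v ^ (d - 1) * Real.exp (-(n:ℝ) * v ^ 2 / 2) := by
    apply (continuous_pow _).mul
    exact (((continuous_const.mul (continuous_pow 2)).div_const 2).rexp)
  have hcont_h : ContinuousOn h (Ioi u) := by
    rw [hhdef]
    exact hcexp.continuousOn.mul (hG.continuousOn.mono hIoi0)
  have hh_nonneg : ∀ v : ℝ, 0 < v → 0 ≤ h v :=
    fun v hv => mul_nonneg (by positivity) (hGpos v hv).le
  have hInt_h : IntegrableOn h (Ioi u) := by
    apply Integrable.mono' ((hg₀ (d-1)).add ((hg₀ (d+1)).const_mul K))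
    · exact hcont_h.aestronglyMeasurable measurableSet_Ioi
    · filter_upwards [ae_restrict_mem measurableSet_Ioi] with v hv
      have hv0 : 0 < v := hu.trans hv
      rw [Real.norm_eq_abs, abs_of_nonneg (hh_nonneg v hv0)]
      have hGub : G v ≤ 1 + K * v ^ 2 := by
        have := (abs_le.1 (hGK v hv0)).2; linarith
      have hpp : v ^ (d-1) * v ^ 2 = v ^ (d+1) := by
        rw [← pow_add]; congr 1; omega
      have e1 : h v ≤ v ^ (d-1) * Real.exp (-(n:ℝ) * v ^ 2 / 2) * (1 + K * v ^ 2) := by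
        rw [hhdef]
        exact mul_le_mul_of_nonneg_left hGub (by positivity)
      have e2 : v ^ (d-1) * Real.exp (-(n:ℝ) * v ^ 2 / 2) * (1 + K * v ^ 2) =
          v ^ (d-1) * Real.exp (-(n:ℝ) * v ^ 2 / 2) +
            K * (v ^ (d+1) * Real.exp (-(n:ℝ) * v ^ 2 / 2)) := by
        rw [← hpp]; ring
      simp only [Pi.add_apply]
      linarith [e1, e2.le, e2.ge]
  have hcontφ' : ContinuousOn φ' (Ioi u) := by
    rw [hφ'def]
    have hdc : ContinuousOn (deriv G) (Ioi u) :=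
      (hG.continuousOn_deriv_of_isOpen isOpen_Ioi le_rfl).mono hIoi0
    have hcG : ContinuousOn G (Ioi u) := hG.continuousOn.mono hIoi0
    apply ContinuousOn.add
    · apply ContinuousOn.sub continuousOn_const
      apply ContinuousOn.div hdc
      · exact ((continuous_const.mul continuous_id).continuousOn).mul hcG
      · intro x hx
        have hx0 : 0 < x := hu.trans hx
        have := hGpos x hx0
        positivity
    · apply ContinuousOn.div
      · apply ContinuousOn.log hcG
        intro x hx; exact ne_of_gt (hGpos x (hu.trans hx))
      · exact (continuous_const.mul (continuous_pow 2)).continuousOn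
      · intro x hx
        have hx0 : 0 < x := hu.trans hx
        positivity
  have hcontφIoi : ContinuousOn φ (Ioi u) := hcontφ.mono Ioi_subset_Ici_self
  have hcontg : Continuous g := by rw [hgdef]; exact hcexp
  have hInt_F : IntegrableOn (fun v => |φ' v| * g (φ v)) (Ioi u) := by
    apply Integrable.mono' (hInt_h.const_mul 2)
    · exact ((hcontφ'.abs).mul (hcontg.comp_continuousOn hcontφIoi)).aestronglyMeasurable
        measurableSet_Ioi
    · filter_upwards [ae_restrict_mem measurableSet_Ioi] with v hv
      have hv0 : 0 < v := hu.trans hv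
      have hpt := hpoint v hv0
      have hF0 : 0 ≤ |φ' v| * g (φ v) := by
        apply mul_nonneg (abs_nonneg _)
        rw [hgdef]
        have := hu.trans (lt_of_lt_of_le (lt_of_lt_of_le hv le_rfl) le_rfl)
        have hφv0 : 0 < φ v := lt_of_lt_of_le (by positivity) (hφ_lb v hv0)
        positivity
      rw [Real.norm_eq_abs, abs_of_nonneg hF0, hpt]
      have hRub : R v ≤ 2 := by
        have := abs_le.1 (hRdev v hv0)
        linarith [hC₁n]
      calc h v * R v ≤ h v * 2 := mul_le_mul_of_nonneg_left hRub (hh_nonneg v hv0)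
        _ = 2 * h v := mul_comm _ _
  have hIJ : (∫ w in Ioi (φ u), g w) = ∫ v in Ioi u, h v * R v := by
    rw [hCOV]
    exact setIntegral_congr_fun measurableSet_Ioi (fun v hv => hpoint v (hu.trans hv))
  have hInt_hR : IntegrableOn (fun v => h v * R v) (Ioi u) :=
    hInt_F.congr_fun (fun v hv => hpoint v (hu.trans hv)) measurableSet_Ioi
  set J : ℝ := ∫ v in Ioi u, h v with hJdef
  set I : ℝ := ∫ w in Ioi (φ u), g w with hIdef
  have hdiffJI : |J - I| ≤ C₁ / n * J := by
    rw [hIJ, hJdef, ← integral_sub hInt_h hInt_hR]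
    have hle : ‖∫ v in Ioi u, (h v - h v * R v)‖ ≤ ∫ v in Ioi u, C₁ / n * h v := by
      apply norm_integral_le_of_norm_le (hInt_h.const_mul (C₁/n))
      filter_upwards [ae_restrict_mem measurableSet_Ioi] with v hv
      have hv0 := hu.trans hv
      have hR := hRdev v hv0
      have hh0 := hh_nonneg v hv0
      rw [Real.norm_eq_abs, show h v - h v * R v = h v * (1 - R v) from by ring,
        abs_mul, abs_of_nonneg hh0, abs_sub_comm]
      calc h v * |R v - 1| ≤ h v * (C₁ / n) := mul_le_mul_of_nonneg_left hR hh0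
        _ = C₁ / n * h v := mul_comm _ _
    rw [Real.norm_eq_abs] at hle
    calc |∫ v in Ioi u, (h v - h v * R v)| ≤ ∫ v in Ioi u, C₁ / n * h v := hle
      _ = C₁ / n * ∫ v in Ioi u, h v := integral_const_mul _ _
  have hJ0 : 0 ≤ J := by
    rw [hJdef]
    exact setIntegral_nonneg measurableSet_Ioi (fun v hv => hh_nonneg v (hu.trans hv))
  have hI0 : 0 ≤ I := by
    rw [hIdef]
    apply setIntegral_nonneg measurableSet_Ioi
    intro w hw
    have hw0 : 0 < w := hφu_pos.trans hw
    rw [hgdef]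
    positivity
  have hJ2I : J ≤ 2 * I := by
    have h1 : J - I ≤ |J - I| := le_abs_self _
    have h2 : C₁ / n * J ≤ 1 / 2 * J := by
      apply mul_le_mul_of_nonneg_right _ hJ0
      linarith [hC₁n]
    linarith [hdiffJI]
  have hfinal : |J - I| ≤ 2 * C₁ / n * I := by
    calc |J - I| ≤ C₁ / n * J := hdiffJI
      _ ≤ C₁ / n * (2 * I) := by
          apply mul_le_mul_of_nonneg_left hJ2I
          positivity
      _ = 2 * C₁ / n * I := by ring
  simpa only [hJdef, hIdef, hhdef, hgdef] using hfinal
end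

section
/- For every x = (x₁,…,x_{k−1}) ∈ ℝ^{k−1}, P(T₁ ≤ x₁, …, T_{k−1} ≤ x_{k−1}) = P(S₁ ≤ x | S₀ = (n₁,…,n_{k−1})), where the inequalities are coordinatewise and the conditioning event {S₀ = (n₁,…,n_{k−1})} has positive probability. Equivalently, the joint law of the group sums (T₁,…,T_{k−1}) under uniform random permutation of the population equals the conditional law of S₁ given S₀ = (n₁,…,n_{k−1}). -/
open MeasureTheory ProbabilityTheory Real Finset

namespace KRaux

variable {K N : ℕ} (n : Fin (K + 1) → ℕ)

/-- offset of block `j` -/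
def O (j : Fin (K + 1)) : ℕ := ∑ i' ∈ Finset.Iio j, n i'

lemma not_mem_Iio_self (j : Fin (K + 1)) : j ∉ Finset.Iio j :=
  fun h => absurd (Finset.mem_Iio.1 h) (lt_irrefl _)

lemma O_add_le {j j' : Fin (K + 1)} (h : j < j') : O n j + n j ≤ O n j' := by
  have hsub : insert j (Finset.Iio j) ⊆ Finset.Iio j' := by
    intro i hi
    rcases Finset.mem_insert.1 hi with rfl | hi
    · exact Finset.mem_Iio.2 h
    · exact Finset.mem_Iio.2 ((Finset.mem_Iio.1 hi).trans h)
  have h3 : ∑ i' ∈ insert j (Finset.Iio j), n i' = n j + O n j :=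
    Finset.sum_insert (not_mem_Iio_self j)
  have h4 : ∑ i' ∈ insert j (Finset.Iio j), n i' ≤ O n j' :=
    Finset.sum_le_sum_of_subset hsub
  omega

lemma O_zero : O n 0 = 0 := by
  have : Finset.Iio (0 : Fin (K + 1)) = ∅ := by
    ext i; simp [Finset.mem_Iio, Fin.not_lt_zero]
  rw [O, this, Finset.sum_empty]

lemma Iio_succ_fin (t : Fin K) :
    Finset.Iio t.succ = insert t.castSucc (Finset.Iio t.castSucc) := by
  ext i
  simp only [Finset.mem_Iio, Finset.mem_insert, Fin.lt_def, Fin.ext_iff,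
    Fin.val_succ, Fin.coe_castSucc]
  omega

lemma O_succ (t : Fin K) : O n t.succ = O n t.castSucc + n t.castSucc := by
  rw [O, Iio_succ_fin, Finset.sum_insert (not_mem_Iio_self _), O]
  ring

lemma O_last_add (hsum : ∑ i, n i = N) : O n (Fin.last K) + n (Fin.last K) = N := by
  have huniv : (Finset.univ : Finset (Fin (K + 1))) =
      insert (Fin.last K) (Finset.Iio (Fin.last K)) := by
    ext i
    simp only [Finset.mem_univ, true_iff, Finset.mem_insert, Finset.mem_Iio]
    rcases eq_or_lt_of_le (Fin.le_last i) with h | h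
    · exact Or.inl h
    · exact Or.inr h
  have : ∑ i, n i = n (Fin.last K) + O n (Fin.last K) := by
    rw [huniv, Finset.sum_insert (not_mem_Iio_self _)]; rfl
  omega

lemma O_add_le_N (hsum : ∑ i, n i = N) (j : Fin (K + 1)) : O n j + n j ≤ N := by
  rcases eq_or_lt_of_le (Fin.le_last j) with h | h
  · rw [h]; exact (O_last_add n hsum).le
  · have h1 := O_add_le n h
    have h2 := O_last_add n hsum
    omega

/-- block index of position `m` -/
def blk (m : Fin N) : Fin (K + 1) :=
  (Finset.univ.filter (fun j => O n j ≤ m.val)).max'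
    ⟨0, Finset.mem_filter.2 ⟨Finset.mem_univ _, by rw [O_zero]; exact Nat.zero_le _⟩⟩

lemma blk_spec (hsum : ∑ i, n i = N) (m : Fin N) :
    O n (blk n m) ≤ m.val ∧ m.val < O n (blk n m) + n (blk n m) := by
  set s := Finset.univ.filter (fun j => O n j ≤ m.val) with hs
  have hne : s.Nonempty :=
    ⟨0, Finset.mem_filter.2 ⟨Finset.mem_univ _, by rw [O_zero]; exact Nat.zero_le _⟩⟩
  have hmem : blk n m ∈ s := Finset.max'_mem s hne
  have h1 : O n (blk n m) ≤ m.val := (Finset.mem_filter.1 hmem).2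
  refine ⟨h1, ?_⟩
  by_contra hcon
  push_neg at hcon
  rcases eq_or_lt_of_le (Fin.le_last (blk n m)) with hl | hl
  · have := O_last_add n hsum
    rw [hl] at hcon
    have := m.isLt
    omega
  · set t := (blk n m).castPred (Fin.ne_last_of_lt hl) with ht
    have htc : t.castSucc = blk n m := Fin.castSucc_castPred _ _
    have hsucc : O n t.succ ≤ m.val := by
      have heq := O_succ n t
      rw [htc] at heq
      omega
    have hmem' : t.succ ∈ s := Finset.mem_filter.2 ⟨Finset.mem_univ _, hsucc⟩
    have hle := Finset.le_max' s t.succ hmem'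
    have hlt : blk n m < t.succ := by
      rw [← htc]; exact (Fin.castSucc_lt_succ : t.castSucc < t.succ)
    exact absurd hle (not_le_of_gt hlt)

lemma blk_eq_iff (hsum : ∑ i, n i = N) (m : Fin N) (j : Fin (K + 1)) :
    blk n m = j ↔ (O n j ≤ m.val ∧ m.val < O n j + n j) := by
  constructor
  · rintro rfl; exact blk_spec n hsum m
  · rintro ⟨h1, h2⟩
    have hspec := blk_spec n hsum m
    rcases lt_trichotomy (blk n m) j with h | h | h
    · have := O_add_le n h; omega
    · exact h
    · have := O_add_le n h; omega

/-- number of positions assigned to block `j` by assignment `c` -/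
def cnt (c : Fin N → Fin (K + 1)) (j : Fin (K + 1)) : ℕ :=
  (Finset.univ.filter (fun m => c m = j)).card

lemma cnt_blk (hsum : ∑ i, n i = N) (j : Fin (K + 1)) :
    cnt (N := N) (blk n) j = n j := by
  have hfil : Finset.univ.filter (fun m : Fin N => blk n m = j) =
      Finset.univ.filter (fun m : Fin N => O n j ≤ m.val ∧ m.val < O n j + n j) := by
    apply Finset.filter_congr
    intro m _
    simpa using blk_eq_iff n hsum m j
  rw [cnt, hfil]
  have hcard : (Finset.univ.filter
      (fun m : Fin N => O n j ≤ m.val ∧ m.val < O n j + n j)).card =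
      ∑ m : Fin N, (if O n j ≤ m.val ∧ m.val < O n j + n j then 1 else 0) := by
    rw [Finset.card_filter]
  rw [hcard, Fin.sum_univ_eq_sum_range (fun i => if O n j ≤ i ∧ i < O n j + n j then 1 else 0) N]
  have hON := O_add_le_N n hsum j
  have : (Finset.range N).filter (fun i => O n j ≤ i ∧ i < O n j + n j) =
      Finset.Ico (O n j) (O n j + n j) := by
    ext i
    simp only [Finset.mem_filter, Finset.mem_range, Finset.mem_Ico]
    omega
  rw [← Finset.card_filter, this, Nat.card_Ico]
  omega

lemma sum_cnt (c : Fin N → Fin (K + 1)) : ∑ j, cnt c j = N := by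
  have h := Finset.card_eq_sum_card_fiberwise
    (f := c) (s := Finset.univ) (t := Finset.univ) (fun x _ => Finset.mem_univ _)
  simp only [Finset.card_univ, Fintype.card_fin] at h
  unfold cnt
  exact h.symm

lemma cnt_last (hsum : ∑ i, n i = N) (c : Fin N → Fin (K + 1))
    (h : ∀ i : Fin K, cnt c i.castSucc = n i.castSucc) :
    cnt c (Fin.last K) = n (Fin.last K) := by
  have h1 := sum_cnt c
  rw [Fin.sum_univ_castSucc] at h1
  have h2 : ∑ i : Fin K, cnt c i.castSucc = ∑ i : Fin K, n i.castSucc :=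
    Finset.sum_congr rfl (fun i _ => h i)
  rw [Fin.sum_univ_castSucc] at hsum
  omega

lemma counts_iff (hsum : ∑ i, n i = N) (c : Fin N → Fin (K + 1)) :
    (∀ j, cnt c j = n j) ↔ (∀ i : Fin K, cnt c i.castSucc = n i.castSucc) :=
  ⟨fun h i => h _, fun h j => Fin.lastCases (cnt_last n hsum c h) (fun i => h i) j⟩

lemma prod_comp_cnt (c : Fin N → Fin (K + 1)) (f : Fin (K + 1) → ℝ) :
    ∏ m, f (c m) = ∏ j, f j ^ cnt c j := by
  rw [← Finset.prod_fiberwise_of_maps_to (g := c) (t := Finset.univ)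
    (fun m _ => Finset.mem_univ (c m)) (fun m => f (c m))]
  apply Finset.prod_congr rfl
  intro j _
  rw [cnt, ← Finset.prod_const]
  apply Finset.prod_congr rfl
  intro m hm
  rw [(Finset.mem_filter.1 hm).2]

lemma cnt_comp_perm (c : Fin N → Fin (K + 1)) (σ : Equiv.Perm (Fin N)) (j : Fin (K + 1)) :
    cnt (fun m => c (σ m)) j = cnt c j := by
  rw [cnt, cnt, Finset.card_filter, Finset.card_filter]
  exact Equiv.sum_comp σ (fun m => if c m = j then 1 else 0)

lemma exists_perm {c c' : Fin N → Fin (K + 1)} (h : ∀ j, cnt c j = cnt c' j) :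
    ∃ pp : Equiv.Perm (Fin N), ∀ m, c (pp m) = c' m := by
  have hcard : ∀ j, Fintype.card {m // c' m = j} = Fintype.card {m // c m = j} := by
    intro j
    rw [Fintype.card_subtype, Fintype.card_subtype]
    exact (h j).symm
  have e : ∀ j, {m // c' m = j} ≃ {m // c m = j} :=
    fun j => Classical.choice (Fintype.card_eq.1 (hcard j))
  set f : Fin N → Fin N := fun m => ((e (c' m)) ⟨m, rfl⟩).val with hf
  have hprop : ∀ m, c (f m) = c' m := fun m => ((e (c' m)) ⟨m, rfl⟩).property
  have haux : ∀ (j j' : Fin (K + 1)), j = j' → ∀ (y : Fin N) (p : c' y = j) (p' : c' y = j'),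
      ((e j ⟨y, p⟩ : {z // c z = j}) : Fin N) = ((e j' ⟨y, p'⟩ : {z // c z = j'}) : Fin N) := by
    rintro j _ rfl y p p'
    rfl
  have hinj : Function.Injective f := by
    intro m m' hmm
    have h1 : c' m = c' m' := by rw [← hprop m, ← hprop m', hmm]
    have h3 : f m' = ((e (c' m)) ⟨m', h1.symm⟩ : {z // c z = c' m}) :=
      (haux (c' m') (c' m) h1.symm m' rfl h1.symm)
    have h2 : ((e (c' m)) ⟨m, rfl⟩ : {z // c z = c' m}) =
        (e (c' m)) ⟨m', h1.symm⟩ := Subtype.ext (by rw [← h3]; exact hmm)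
    have := (e (c' m)).injective h2
    exact congrArg Subtype.val this
  exact ⟨Equiv.ofBijective f ((Finite.injective_iff_bijective).1 hinj), hprop⟩

variable (b : Fin N → Fin (K + 1))

lemma fiber_card_le {c c' : Fin N → Fin (K + 1)} (pp : Equiv.Perm (Fin N))
    (hpp : ∀ m, c (pp m) = c' m) :
    (univ.filter (fun σ : Equiv.Perm (Fin N) => (fun m => b (σ⁻¹ m)) = c)).card ≤
    (univ.filter (fun σ : Equiv.Perm (Fin N) => (fun m => b (σ⁻¹ m)) = c')).card := by
  apply Finset.card_le_card_of_injOn (fun σ => σ.trans pp.symm)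
  · intro σ hσ
    simp only [Finset.mem_coe, mem_filter, mem_univ, true_and] at *
    funext m
    have h1 : (σ.trans pp.symm)⁻¹ m = σ⁻¹ (pp m) := by
      simp [Equiv.Perm.inv_def]
    rw [h1]
    have := congrFun hσ (pp m)
    rw [this, hpp]
  · intro σ _ σ' _ hss
    have : ∀ m, σ m = σ' m := by
      intro m
      have := congrFun
        (congrArg (fun (e : Equiv.Perm (Fin N)) => (e.trans pp : Fin N → Fin N)) hss) m
      simpa using this
    exact Equiv.ext this

lemma fiber_card_eq {c c' : Fin N → Fin (K + 1)} (h : ∀ j, cnt c j = cnt c' j) :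
    (univ.filter (fun σ : Equiv.Perm (Fin N) => (fun m => b (σ⁻¹ m)) = c)).card =
    (univ.filter (fun σ : Equiv.Perm (Fin N) => (fun m => b (σ⁻¹ m)) = c')).card := by
  obtain ⟨pp, hpp⟩ := exists_perm h
  have hpp' : ∀ m, c' (pp.symm m) = c m := by
    intro m
    rw [← hpp (pp.symm m), Equiv.apply_symm_apply]
  exact le_antisymm (fiber_card_le b pp hpp) (fiber_card_le b pp.symm hpp')

lemma perm_count (hb : ∀ j, cnt b j = n j) (Q : (Fin N → Fin (K + 1)) → Prop)
    [DecidablePred Q] :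
    ∃ F : ℕ, 0 < F ∧
      (univ.filter (fun σ : Equiv.Perm (Fin N) => Q (fun m => b (σ⁻¹ m)))).card =
        (univ.filter (fun c : Fin N → Fin (K + 1) =>
          (∀ j, cnt c j = n j) ∧ Q c)).card * F ∧
      Nat.factorial N =
        (univ.filter (fun c : Fin N → Fin (K + 1) => ∀ j, cnt c j = n j)).card * F := by
  classical
  set φ : Equiv.Perm (Fin N) → (Fin N → Fin (K + 1)) := fun σ => (fun m => b (σ⁻¹ m)) with hφ
  have hφcnt : ∀ σ : Equiv.Perm (Fin N), ∀ j, cnt (φ σ) j = n j := by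
    intro σ j
    have : cnt (fun m => b (σ⁻¹ m)) j = cnt b j := cnt_comp_perm b σ⁻¹ j
    rw [hφ]
    simp only
    rw [this, hb]
  set C₀ : Finset (Fin N → Fin (K + 1)) :=
    univ.filter (fun c => ∀ j, cnt c j = n j) with hC₀
  set F : ℕ := (univ.filter (fun σ : Equiv.Perm (Fin N) => φ σ = b)).card with hFdef
  have hFib : ∀ c ∈ C₀, (univ.filter (fun σ : Equiv.Perm (Fin N) => φ σ = c)).card = F := by
    intro c hc
    have hc' : ∀ j, cnt c j = n j := (Finset.mem_filter.1 hc).2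
    exact fiber_card_eq b (fun j => by rw [hc' j, hb j])
  have hFpos : 0 < F := by
    rw [hFdef]
    apply Finset.card_pos.2
    refine ⟨1, Finset.mem_filter.2 ⟨Finset.mem_univ _, ?_⟩⟩
    funext m
    simp [hφ, Equiv.Perm.one_symm]
  refine ⟨F, hFpos, ?_, ?_⟩
  · have hmap : ∀ σ ∈ univ.filter (fun σ : Equiv.Perm (Fin N) => Q (φ σ)), φ σ ∈ C₀ :=
      fun σ _ => Finset.mem_filter.2 ⟨Finset.mem_univ _, hφcnt σ⟩
    rw [Finset.card_eq_sum_card_fiberwise hmap]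
    have hterm : ∀ c ∈ C₀,
        ((univ.filter (fun σ : Equiv.Perm (Fin N) => Q (φ σ))).filter
          (fun σ => φ σ = c)).card = if Q c then F else 0 := by
      intro c hc
      rw [Finset.filter_filter]
      by_cases hQ : Q c
      · rw [if_pos hQ, ← hFib c hc]
        congr 1
        apply Finset.filter_congr
        intro σ _
        constructor
        · rintro ⟨_, h2⟩; exact h2
        · rintro h2; exact ⟨by rw [h2]; exact hQ, h2⟩
      · rw [if_neg hQ, Finset.card_eq_zero]
        apply Finset.filter_false_of_mem
        rintro σ _ ⟨h1, h2⟩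
        rw [h2] at h1
        exact hQ h1
    rw [Finset.sum_congr rfl hterm]
    have h5 : (∑ c ∈ C₀, if Q c then F else 0) = ∑ c ∈ C₀.filter Q, F :=
      (Finset.sum_filter _ _).symm
    rw [h5, Finset.sum_const, smul_eq_mul, hC₀, Finset.filter_filter]
  · have h6 : (univ : Finset (Equiv.Perm (Fin N))).card = Nat.factorial N := by
      rw [Finset.card_univ, Fintype.card_perm, Fintype.card_fin]
    have hmap' : ∀ σ ∈ (univ : Finset (Equiv.Perm (Fin N))), φ σ ∈ C₀ :=
      fun σ _ => Finset.mem_filter.2 ⟨Finset.mem_univ _, hφcnt σ⟩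
    rw [← h6, Finset.card_eq_sum_card_fiberwise hmap', Finset.sum_congr rfl hFib,
      Finset.sum_const, smul_eq_mul, hC₀]

/-- the value `e_i` (for `j = i.castSucc`) or `0` (for `j = last`) -/
def v (K : ℕ) (j : Fin (K + 1)) : Fin K → ℝ := fun i => if i.castSucc = j then 1 else 0

lemma v_castSucc (i : Fin K) : v K i.castSucc = Pi.single i 1 := by
  funext i'
  simp [v, Pi.single_apply, Fin.castSucc_inj]

lemma v_last : v K (Fin.last K) = 0 := by
  funext i'
  simp [v, (Fin.castSucc_lt_last i').ne]

lemma v_inj : Function.Injective (v K) := by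
  intro j j' h
  induction j using Fin.lastCases with
  | last =>
    induction j' using Fin.lastCases with
    | last => rfl
    | cast i' =>
      exfalso
      have h0 := congrFun h i'
      rw [v_last, v_castSucc] at h0
      simp [Pi.single_apply] at h0
  | cast i =>
    induction j' using Fin.lastCases with
    | last =>
      exfalso
      have h0 := congrFun h i
      rw [v_last, v_castSucc] at h0
      simp [Pi.single_apply] at h0
    | cast i' =>
      have h0 := congrFun h i
      rw [v_castSucc, v_castSucc] at h0
      by_cases hii : i = i'
      · rw [hii]
      · exfalso
        rw [Pi.single_apply, Pi.single_apply, if_pos rfl, if_neg hii] at h0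
        exact one_ne_zero h0

lemma sum_v_apply (c : Fin N → Fin (K + 1)) (i : Fin K) :
    (∑ m, v K (c m)) i = (cnt c i.castSucc : ℝ) := by
  rw [Finset.sum_apply, cnt, Finset.card_filter, Nat.cast_sum]
  apply Finset.sum_congr rfl
  intro m _
  simp only [v]
  by_cases hm : c m = i.castSucc
  · rw [if_pos hm.symm, if_pos hm, Nat.cast_one]
  · rw [if_neg (fun hh => hm hh.symm), if_neg hm, Nat.cast_zero]

lemma sum_smul_v_apply (a : Fin N → ℝ) (c : Fin N → Fin (K + 1)) (i : Fin K) :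
    (∑ m, a m • v K (c m)) i = ∑ m, (if c m = i.castSucc then a m else 0) := by
  rw [Finset.sum_apply]
  apply Finset.sum_congr rfl
  intro m _
  simp only [Pi.smul_apply, smul_eq_mul, v]
  by_cases hm : c m = i.castSucc
  · rw [if_pos hm.symm, if_pos hm, mul_one]
  · rw [if_neg (fun hh => hm hh.symm), if_neg hm, mul_zero]

end KRaux

set_option maxHeartbeats 1000000 in
/-- **Conditional representation of the `k`-sample permutation distribution**
(Section 3.1 of Kolassa–Robinson, with `k = K + 1`). Let `a₁,…,a_N` be a finite population,
`n₁,…,n_k` positive integers summing to `N`, and `T_i` the sum of the `i`-th block of size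
`n_i` of the values permuted by a uniform random permutation. Let `I₁,…,I_N` be i.i.d.
random vectors in `ℝ^{k−1}` with `P(I_m = e_i) = n_i/N` for `i < k` and
`P(I_m = 0) = n_k/N`, and set `S₀ = Σ_m I_m`, `S₁ = Σ_m a_m I_m`. Then the event
`{S₀ = (n₁,…,n_{k−1})}` has positive probability and, for every `x ∈ ℝ^{k−1}`,
`P(T₁ ≤ x₁, …, T_{k−1} ≤ x_{k−1}) = P(S₁ ≤ x | S₀ = (n₁,…,n_{k−1}))`. -/
theorem ksample_permutation_conditional_representation
    (K N : ℕ) (n : Fin (K + 1) → ℕ) (hn : ∀ i, 0 < n i) (hsum : ∑ i, n i = N)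
    (a : Fin N → ℝ)
    (Ω : Type) (mΩ : MeasureSpace Ω) (hprob : IsProbabilityMeasure (ℙ : Measure Ω))
    (I : Fin N → Ω → (Fin K → ℝ))
    (hmeas : ∀ m, Measurable (I m))
    (hindep : ProbabilityTheory.iIndepFun I ℙ)
    -- `P(I_m = e_i) = n_i / N` for `i = 1, …, k − 1`
    (hlaw : ∀ m, ∀ i : Fin K,
      ((ℙ : Measure Ω) {ω : Ω | I m ω = Pi.single i 1}).toReal =
        (n i.castSucc : ℝ) / N)
    -- `P(I_m = 0) = n_k / N`
    (hlaw0 : ∀ m,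
      ((ℙ : Measure Ω) {ω : Ω | I m ω = 0}).toReal = (n (Fin.last K) : ℝ) / N) :
    0 < ((ℙ : Measure Ω)
        {ω : Ω | (∑ m, I m ω) = fun i => (n i.castSucc : ℝ)}).toReal ∧
    ∀ x : Fin K → ℝ,
      -- the permutation probability `P(T₁ ≤ x₁, …, T_{k−1} ≤ x_{k−1})`, where the
      -- group sums are `T_i(σ) = Σ_{m in block i} a_{σ(m)}` and the blocks are the
      -- consecutive index intervals of lengths `n₁, …, n_k`
      (Nat.card {σ : Equiv.Perm (Fin N) // ∀ i : Fin K,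
          (∑ m : Fin N, if (∑ i' ∈ Finset.Iio i.castSucc, n i') ≤ (m : ℕ) ∧
              (m : ℕ) < (∑ i' ∈ Finset.Iio i.castSucc, n i') + n i.castSucc
            then a (σ m) else 0) ≤ x i} : ℝ) / (Nat.factorial N) =
      ((ℙ : Measure Ω) {ω : Ω | (∀ i, (∑ m, a m • I m ω) i ≤ x i) ∧
          (∑ m, I m ω) = fun i => (n i.castSucc : ℝ)}).toReal /
        ((ℙ : Measure Ω)
          {ω : Ω | (∑ m, I m ω) = fun i => (n i.castSucc : ℝ)}).toReal := by
  classical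
  have hN : 0 < N := by
    have : 0 < ∑ i, n i := Finset.sum_pos (fun i _ => hn i) ⟨0, Finset.mem_univ 0⟩
    omega
  have hNR : (0 : ℝ) < N := by exact_mod_cast hN
  set nvec : Fin K → ℝ := fun i => (n i.castSucc : ℝ) with hnvec
  -- the elementary events
  set E : (Fin N → Fin (K + 1)) → Set Ω := fun c => ⋂ m, I m ⁻¹' {KRaux.v K (c m)} with hE
  have hEmeas : ∀ c, MeasurableSet (E c) := fun c =>
    MeasurableSet.iInter (fun m => hmeas m (measurableSet_singleton _))
  have hper : ∀ (m : Fin N) (j : Fin (K + 1)),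
      ((ℙ : Measure Ω) (I m ⁻¹' {KRaux.v K j})).toReal = (n j : ℝ) / N := by
    intro m j
    induction j using Fin.lastCases with
    | last =>
      rw [KRaux.v_last]
      exact hlaw0 m
    | cast i =>
      rw [KRaux.v_castSucc]
      exact hlaw m i
  have hEprob : ∀ c, ((ℙ : Measure Ω) (E c)).toReal = ∏ m, ((n (c m) : ℝ) / N) := by
    intro c
    have h1 : (ℙ : Measure Ω) (E c) = ∏ m, (ℙ : Measure Ω) (I m ⁻¹' {KRaux.v K (c m)}) := by
      rw [hE]
      exact hindep.meas_iInter
        (fun m => ⟨{KRaux.v K (c m)}, measurableSet_singleton _, rfl⟩)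
    rw [h1, ENNReal.toReal_prod]
    exact Finset.prod_congr rfl (fun m _ => hper m (c m))
  have hmemE : ∀ (c) (ω : Ω), ω ∈ E c → ∀ m, I m ω = KRaux.v K (c m) := by
    intro c ω hω m
    exact Set.mem_singleton_iff.1 (Set.mem_preimage.1 (Set.mem_iInter.1 hω m))
  have hdisj : ∀ {c c' : Fin N → Fin (K + 1)}, c ≠ c' → Disjoint (E c) (E c') := by
    intro c c' hne
    rw [Set.disjoint_left]
    intro ω hω hω'
    apply hne
    funext m
    exact KRaux.v_inj ((hmemE c ω hω m).symm.trans (hmemE c' ω hω' m))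
  -- total mass of the elementary events is one
  have hsumprob : ∑ c : Fin N → Fin (K + 1), ((ℙ : Measure Ω) (E c)).toReal = 1 := by
    rw [Finset.sum_congr rfl (fun c _ => hEprob c)]
    have h4 : ∑ c : Fin N → Fin (K + 1), ∏ m : Fin N, ((n (c m) : ℝ) / N) =
        ∏ m : Fin N, ∑ j : Fin (K + 1), ((n j : ℝ) / N) := by
      have := Finset.prod_univ_sum (fun _ : Fin N => (Finset.univ : Finset (Fin (K + 1))))
        (fun _ j => (n j : ℝ) / N)
      rw [Fintype.piFinset_univ] at this
      exact this.symm
    rw [h4]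
    have h5 : ∑ j : Fin (K + 1), ((n j : ℝ) / N) = 1 := by
      rw [← Finset.sum_div]
      have : (∑ j, (n j : ℝ)) = (N : ℝ) := by exact_mod_cast hsum
      rw [this, div_self (ne_of_gt hNR)]
    rw [h5]
    exact Finset.prod_const_one
  have htotal : (ℙ : Measure Ω) (⋃ c, E c) = 1 := by
    have hU : (⋃ c, E c) = ⋃ c ∈ (Finset.univ : Finset (Fin N → Fin (K + 1))), E c := by
      simp
    have h1 : (ℙ : Measure Ω) (⋃ c ∈ (Finset.univ : Finset (Fin N → Fin (K + 1))), E c) =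
        ∑ c, (ℙ : Measure Ω) (E c) :=
      measure_biUnion_finset (fun c _ c' _ h => hdisj h) (fun c _ => hEmeas c)
    have h2 : (∑ c, (ℙ : Measure Ω) (E c)).toReal = 1 := by
      rw [ENNReal.toReal_sum (fun c _ => measure_ne_top _ _)]
      exact hsumprob
    rw [hU, h1]
    exact (ENNReal.toReal_eq_one_iff _).1 h2
  -- decomposition of any event over the elementary events
  have hdecomp : ∀ B : Set Ω, MeasurableSet B →
      ((ℙ : Measure Ω) B).toReal =
        ∑ c : Fin N → Fin (K + 1), ((ℙ : Measure Ω) (B ∩ E c)).toReal := by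
    intro B hB
    have hUmeas : MeasurableSet (⋃ c, E c) := MeasurableSet.iUnion (fun c => hEmeas c)
    have h1 : (ℙ : Measure Ω) (B ∩ ⋃ c, E c) + (ℙ : Measure Ω) (B \ ⋃ c, E c) =
        (ℙ : Measure Ω) B := measure_inter_add_diff B hUmeas
    have h2 : (ℙ : Measure Ω) (B \ ⋃ c, E c) = 0 := by
      have hsub : B \ (⋃ c, E c) ⊆ (⋃ c, E c)ᶜ := fun ω hω => hω.2
      have hc : (ℙ : Measure Ω) ((⋃ c, E c)ᶜ) = 0 := by
        rw [measure_compl hUmeas (measure_ne_top _ _), htotal, measure_univ, tsub_self]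
      exact measure_mono_null hsub hc
    have h3 : B ∩ ⋃ c, E c = ⋃ c ∈ (Finset.univ : Finset (Fin N → Fin (K + 1))), (B ∩ E c) := by
      rw [Set.inter_iUnion]
      simp
    have h4 : (ℙ : Measure Ω) (B ∩ ⋃ c, E c) = ∑ c, (ℙ : Measure Ω) (B ∩ E c) := by
      rw [h3]
      exact measure_biUnion_finset
        (fun c _ c' _ h => (hdisj h).mono Set.inter_subset_right Set.inter_subset_right)
        (fun c _ => hB.inter (hEmeas c))
    have h5 : (ℙ : Measure Ω) B = ∑ c, (ℙ : Measure Ω) (B ∩ E c) := by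
      rw [← h1, h2, add_zero, h4]
    rw [h5, ENNReal.toReal_sum (fun c _ => measure_ne_top _ _)]
  -- behaviour of the sums on an elementary event
  have hSc : ∀ (c) (ω : Ω), ω ∈ E c → (∑ m, I m ω) = ∑ m, KRaux.v K (c m) :=
    fun c ω hω => Finset.sum_congr rfl (fun m _ => hmemE c ω hω m)
  have hSac : ∀ (c) (ω : Ω), ω ∈ E c →
      (∑ m, a m • I m ω) = ∑ m, a m • KRaux.v K (c m) :=
    fun c ω hω => Finset.sum_congr rfl (fun m _ => by rw [hmemE c ω hω m])
  -- the counting predicate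
  set Qc : (Fin N → Fin (K + 1)) → Prop :=
    fun c => ∀ i : Fin K, KRaux.cnt c i.castSucc = n i.castSucc with hQc
  have hQciff : ∀ c, (∑ m, KRaux.v K (c m)) = nvec ↔ Qc c := by
    intro c
    constructor
    · intro h i
      have h2 := congrFun h i
      rw [KRaux.sum_v_apply] at h2
      simp only [hnvec] at h2
      exact_mod_cast h2
    · intro h
      funext i
      rw [KRaux.sum_v_apply, h i]
  have hB0pos : ∀ c, Qc c → ({ω : Ω | (∑ m, I m ω) = nvec} ∩ E c) = E c := by
    intro c h
    apply Set.inter_eq_self_of_subset_right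
    intro ω hω
    show (∑ m, I m ω) = nvec
    rw [hSc c ω hω]
    exact (hQciff c).2 h
  have hB0neg : ∀ c, ¬ Qc c → ({ω : Ω | (∑ m, I m ω) = nvec} ∩ E c) = ∅ := by
    intro c h
    apply Set.eq_empty_iff_forall_notMem.2
    rintro ω ⟨hω1, hω2⟩
    apply h
    apply (hQciff c).1
    rw [← hSc c ω hω2]
    exact hω1
  -- the common weight of an elementary event with the right counts
  set W : ℝ := ∏ j, ((n j : ℝ) / N) ^ (n j) with hW
  have hWpos : 0 < W :=
    Finset.prod_pos (fun j _ => pow_pos (div_pos (Nat.cast_pos.2 (hn j)) hNR) _)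
  have hprodW : ∀ c, Qc c → ∏ m, ((n (c m) : ℝ) / N) = W := by
    intro c hc
    rw [KRaux.prod_comp_cnt c (fun j => (n j : ℝ) / N)]
    apply Finset.prod_congr rfl
    intro j _
    rw [(KRaux.counts_iff n hsum c).2 hc j]
  -- the generic probability computation
  have hPB : ∀ (B : Set Ω), MeasurableSet B → ∀ (P : (Fin N → Fin (K + 1)) → Prop)
      (_ : DecidablePred P),
      (∀ c, P c → Qc c) → (∀ c, P c → B ∩ E c = E c) → (∀ c, ¬ P c → B ∩ E c = ∅) →
      ((ℙ : Measure Ω) B).toReal = (Finset.univ.filter P).card * W := by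
    intro B hB P hP hPQ hpos hneg
    rw [hdecomp B hB]
    have hterm : ∀ c : Fin N → Fin (K + 1),
        ((ℙ : Measure Ω) (B ∩ E c)).toReal = if P c then W else 0 := by
      intro c
      by_cases h : P c
      · rw [hpos c h, if_pos h, hEprob c, hprodW c (hPQ c h)]
      · rw [hneg c h, if_neg h]
        simp
    rw [Finset.sum_congr rfl (fun c _ => hterm c), ← Finset.sum_filter,
      Finset.sum_const, nsmul_eq_mul]
  -- measurability of the two events
  have hS0meas : Measurable (fun ω : Ω => ∑ m, I m ω) :=
    Finset.measurable_sum Finset.univ (fun m _ => hmeas m)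
  have hB0meas : MeasurableSet {ω : Ω | (∑ m, I m ω) = nvec} :=
    hS0meas (measurableSet_singleton nvec)
  -- probability of the conditioning event
  have hP0 := hPB _ hB0meas Qc (by infer_instance) (fun _ h => h) hB0pos hB0neg
  have hcard0pos : 0 < (Finset.univ.filter Qc).card := by
    apply Finset.card_pos.2
    refine ⟨KRaux.blk n, Finset.mem_filter.2 ⟨Finset.mem_univ _, fun i => ?_⟩⟩
    exact KRaux.cnt_blk n hsum i.castSucc
  constructor
  · rw [hP0]
    apply mul_pos _ hWpos
    exact_mod_cast hcard0pos
  · intro x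
    -- the threshold predicate
    set Qx : (Fin N → Fin (K + 1)) → Prop :=
      fun c => ∀ i : Fin K, (∑ m, if c m = i.castSucc then a m else 0) ≤ x i with hQx
    have hQxiff : ∀ c, (∀ i, (∑ m, a m • KRaux.v K (c m)) i ≤ x i) ↔ Qx c := by
      intro c
      apply forall_congr'
      intro i
      rw [KRaux.sum_smul_v_apply]
    have hB1pos : ∀ c, (Qc c ∧ Qx c) →
        ({ω : Ω | (∀ i, (∑ m, a m • I m ω) i ≤ x i) ∧ (∑ m, I m ω) = nvec} ∩ E c) = E c := by
      intro c h
      apply Set.inter_eq_self_of_subset_right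
      intro ω hω
      constructor
      · intro i
        rw [hSac c ω hω]
        exact (hQxiff c).2 h.2 i
      · rw [hSc c ω hω]
        exact (hQciff c).2 h.1
    have hB1neg : ∀ c, ¬ (Qc c ∧ Qx c) →
        ({ω : Ω | (∀ i, (∑ m, a m • I m ω) i ≤ x i) ∧ (∑ m, I m ω) = nvec} ∩ E c) = ∅ := by
      intro c h
      apply Set.eq_empty_iff_forall_notMem.2
      rintro ω ⟨⟨hω1, hω2⟩, hω3⟩
      apply h
      constructor
      · apply (hQciff c).1
        rw [← hSc c ω hω3]
        exact hω2
      · apply (hQxiff c).1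
        intro i
        rw [← hSac c ω hω3]
        exact hω1 i
    have hS1meas : Measurable (fun ω : Ω => ∑ m, a m • I m ω) :=
      Finset.measurable_sum Finset.univ (fun m _ => (hmeas m).const_smul (a m))
    have hB1meas : MeasurableSet
        {ω : Ω | (∀ i, (∑ m, a m • I m ω) i ≤ x i) ∧ (∑ m, I m ω) = nvec} := by
      have heq : {ω : Ω | (∀ i, (∑ m, a m • I m ω) i ≤ x i) ∧ (∑ m, I m ω) = nvec} =
          (⋂ i, {ω : Ω | (∑ m, a m • I m ω) i ≤ x i}) ∩ {ω : Ω | (∑ m, I m ω) = nvec} := by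
        ext ω
        simp [Set.mem_iInter]
      rw [heq]
      apply MeasurableSet.inter _ hB0meas
      apply MeasurableSet.iInter
      intro i
      exact measurableSet_le ((measurable_pi_apply i).comp hS1meas) measurable_const
    have hP1 := hPB _ hB1meas (fun c => Qc c ∧ Qx c) (by infer_instance)
      (fun c h => h.1) hB1pos hB1neg
    -- the permutation count
    obtain ⟨F, hFpos, hcard1, hcard2⟩ :=
      KRaux.perm_count n (KRaux.blk n) (KRaux.cnt_blk n hsum) Qx
    -- rewrite the filters to use `Qc`
    have hfilter0 : Finset.univ.filter
        (fun c : Fin N → Fin (K + 1) => ∀ j, KRaux.cnt c j = n j) = Finset.univ.filter Qc :=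
      Finset.filter_congr (fun c _ => KRaux.counts_iff n hsum c)
    have hfilter1 : Finset.univ.filter
        (fun c : Fin N → Fin (K + 1) => (∀ j, KRaux.cnt c j = n j) ∧ Qx c) =
        Finset.univ.filter (fun c => Qc c ∧ Qx c) :=
      Finset.filter_congr (fun c _ =>
        and_congr_left' (KRaux.counts_iff n hsum c))
    rw [hfilter0] at hcard2
    rw [hfilter1] at hcard1
    -- the translation of the permutation condition
    have hcond : ∀ (σ : Equiv.Perm (Fin N)) (i : Fin K),
        (∑ m : Fin N, if (∑ i' ∈ Finset.Iio i.castSucc, n i') ≤ (m : ℕ) ∧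
            (m : ℕ) < (∑ i' ∈ Finset.Iio i.castSucc, n i') + n i.castSucc
          then a (σ m) else 0)
        = ∑ m : Fin N, (if KRaux.blk n (σ⁻¹ m) = i.castSucc then a m else 0) := by
      intro σ i
      have step1 : (∑ m : Fin N, if (∑ i' ∈ Finset.Iio i.castSucc, n i') ≤ (m : ℕ) ∧
            (m : ℕ) < (∑ i' ∈ Finset.Iio i.castSucc, n i') + n i.castSucc
          then a (σ m) else 0)
          = ∑ m : Fin N, (if KRaux.blk n m = i.castSucc then a (σ m) else 0) := by
        apply Finset.sum_congr rfl
        intro m _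
        apply if_congr _ rfl rfl
        exact (KRaux.blk_eq_iff n hsum m i.castSucc).symm
      rw [step1]
      have step2 := Equiv.sum_comp σ
        (fun m => if KRaux.blk n (σ⁻¹ m) = i.castSucc then a m else 0)
      rw [← step2]
      apply Finset.sum_congr rfl
      intro m _
      simp only [Equiv.Perm.inv_def, Equiv.symm_apply_apply]
    -- convert `Nat.card` to a filtered count
    have hNatcard : (Nat.card {σ : Equiv.Perm (Fin N) // ∀ i : Fin K,
        (∑ m : Fin N, if (∑ i' ∈ Finset.Iio i.castSucc, n i') ≤ (m : ℕ) ∧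
            (m : ℕ) < (∑ i' ∈ Finset.Iio i.castSucc, n i') + n i.castSucc
          then a (σ m) else 0) ≤ x i}) =
        (Finset.univ.filter (fun σ : Equiv.Perm (Fin N) =>
          Qx (fun m => KRaux.blk n (σ⁻¹ m)))).card := by
      rw [Nat.card_eq_fintype_card, Fintype.card_subtype]
      congr 1
      apply Finset.filter_congr
      intro σ _
      apply forall_congr'
      intro i
      rw [hcond σ i]
    rw [hNatcard, hcard1, hP1, hP0, hcard2]
    have hFne : (F : ℝ) ≠ 0 := by exact_mod_cast hFpos.ne'
    have hWne : W ≠ 0 := hWpos.ne'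
    have hAne : ((Finset.univ.filter Qc).card : ℝ) ≠ 0 := by exact_mod_cast hcard0pos.ne'
    push_cast
    rw [mul_div_mul_right _ _ hFne, mul_div_mul_right _ _ hWne]
end
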